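/- Asymptotic normalization for the payoff λ-calculus: the parallel weak reduction ⇒pw is deterministic (each configuration has exactly one ⇒pw-successor); ⇒pw is asymptotically complete for ⊳w and for → (if c ⊳w⇓ n̄, or c →⇓ n̄, then c ⇒pw⇓ n̄' for some n̄' with n̄ ≤ n̄'); and for every configuration c, the set Lim(c,→) = { n̄ ∈ ℕ∞ : c →⇓ n̄ } has a greatest element ⟦c⟧ and the unique ⇒pw-sequence from c has limit ⟦c⟧. -/

import Mathlib

/-- Terms of the payoff λ-calculus `Λtick`, in de Bruijn representation:
`M ::= x | λx.M | M M | tick M`. -/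
inductive TTm : Type
  | var : ℕ → TTm
  | lam : TTm → TTm
  | app : TTm → TTm → TTm
  | tick : TTm → TTm
deriving DecidableEq

namespace TTm

/-- Lift (shift by one) the free variables of index `≥ d`. -/
def lift (d : ℕ) : TTm → TTm
  | var n => if n < d then var n else var (n + 1)
  | lam M => lam (lift (d + 1) M)
  | app M N => app (lift d M) (lift d N)
  | tick M => tick (lift d M)

/-- Capture-avoiding substitution `M[N/k]`. -/
def subst : TTm → ℕ → TTm → TTm
  | var n, k, N => if n = k then N else if k < n then var (n - 1) else var n
  | lam M, k, N => lam (subst M (k + 1) (lift 0 N))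
  | app M₁ M₂, k, N => app (subst M₁ k N) (subst M₂ k N)
  | tick M, k, N => tick (subst M k N)

end TTm

/-- Values: variables and abstractions. -/
inductive IsVal : TTm → Prop
  | var (n : ℕ) : IsVal (TTm.var n)
  | lam (M : TTm) : IsVal (TTm.lam M)

/-- The root rule `(λx.M)V ↦βv M[V/x]`, for `V` a value. -/
inductive RootBv : TTm → TTm → Prop
  | beta {M V} : IsVal V → RootBv (TTm.app (TTm.lam M) V) (M.subst 0 V)

/-- Full βv-reduction on terms: closure of `↦βv` under arbitrary contexts. -/
inductive FullBv : TTm → TTm → Prop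
  | root {M M'} : RootBv M M' → FullBv M M'
  | lam {M M'} : FullBv M M' → FullBv (TTm.lam M) (TTm.lam M')
  | appL {M M' N} : FullBv M M' → FullBv (TTm.app M N) (TTm.app M' N)
  | appR {M N N'} : FullBv N N' → FullBv (TTm.app M N) (TTm.app M N')
  | tick {M M'} : FullBv M M' → FullBv (TTm.tick M) (TTm.tick M')

/-- Weak βv-reduction: closure of `↦βv` under weak contexts `W ::= ⟨⟩ | W M | M W`. -/
inductive WeakBv : TTm → TTm → Prop
  | root {M M'} : RootBv M M' → WeakBv M M'
  | appL {M M' N} : WeakBv M M' → WeakBv (TTm.app M N) (TTm.app M' N)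
  | appR {M N N'} : WeakBv N N' → WeakBv (TTm.app M N) (TTm.app M N')

/-- The tick rule under weak contexts: `W⟨tick P⟩ → W⟨P⟩`. -/
inductive WTick : TTm → TTm → Prop
  | root (P : TTm) : WTick (TTm.tick P) P
  | appL {M M' N} : WTick M M' → WTick (TTm.app M N) (TTm.app M' N)
  | appR {M N N'} : WTick N N' → WTick (TTm.app M N) (TTm.app M N')

/-- Full reduction `→ := →βv ∪ →tick` on configurations `(n, M)`:
βv-steps keep the counter, tick-steps (in weak position) increment it. -/
def FullRed : ℕ × TTm → ℕ × TTm → Prop := fun c c' =>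
  (FullBv c.2 c'.2 ∧ c'.1 = c.1) ∨ (WTick c.2 c'.2 ∧ c'.1 = c.1 + 1)

/-- Weak reduction `⊳w := →w,βv ∪ →tick` on configurations. -/
def WeakRed : ℕ × TTm → ℕ × TTm → Prop := fun c c' =>
  (WeakBv c.2 c'.2 ∧ c'.1 = c.1) ∨ (WTick c.2 c'.2 ∧ c'.1 = c.1 + 1)

/-- The observation: the payoff counter, in `ℕ∞ = ℕ ∪ {∞}`. -/
def obs (c : ℕ × TTm) : ℕ∞ := (c.1 : ℕ∞)

/-- A configuration is `R`-normal if it has no `R`-successor. -/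
def CNormal (R : ℕ × TTm → ℕ × TTm → Prop) (c : ℕ × TTm) : Prop := ∀ d, ¬ R c d

/-- An `R`-sequence from `c`: at each step either an `R`-step is performed, or the
current configuration is `R`-normal and the sequence stays constant. -/
def CSeq (R : ℕ × TTm → ℕ × TTm → Prop) (c : ℕ × TTm) (f : ℕ → ℕ × TTm) : Prop :=
  f 0 = c ∧ ∀ i, R (f i) (f (i + 1)) ∨ (CNormal R (f i) ∧ f (i + 1) = f i)

/-- `c R⇓ n̄` : some `R`-sequence from `c` has limit (supremum of payoffs) `n̄ ∈ ℕ∞`. -/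
def CConv (R : ℕ × TTm → ℕ × TTm → Prop) (c : ℕ × TTm) (p : ℕ∞) : Prop :=
  ∃ f : ℕ → ℕ × TTm, CSeq R c f ∧ IsLUB (Set.range fun i => obs (f i)) p

/-- Parallel weak reduction `⇒pw` on configurations. -/
inductive Pw : ℕ × TTm → ℕ × TTm → Prop
  | root {M M'} : RootBv M M' → Pw (0, M) (0, M')
  | tick (P : TTm) : Pw (0, TTm.tick P) (1, P)
  | value {V} : IsVal V → Pw (0, V) (0, V)
  | app {P₁ P₂ k₁ k₂ P₁' P₂'} : (∀ N, ¬ RootBv (TTm.app P₁ P₂) N) →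
      Pw (0, P₁) (k₁, P₁') → Pw (0, P₂) (k₂, P₂') →
      Pw (0, TTm.app P₁ P₂) (k₁ + k₂, TTm.app P₁' P₂')
  | pos {n M k M'} : 0 < n → Pw (0, M) (k, M') → Pw (n, M) (n + k, M')

/-! ### Part A : lift/subst arithmetic -/

namespace TTm

theorem lift_lift : ∀ (M : TTm) (i j : ℕ), i ≤ j →
    lift i (lift j M) = lift (j+1) (lift i M) := by
  intro M
  induction M with
  | var n =>
    intro i j h
    simp only [lift]
    split_ifs <;> simp only [lift] <;> split_ifs <;>
      first
      | rfl
      | (exfalso; omega)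
      | (simp only [var.injEq]; omega)
  | lam M ih =>
    intro i j h
    simp only [lift]; rw [ih (i+1) (j+1) (by omega)]
  | app M N ihM ihN =>
    intro i j h
    simp only [lift]; rw [ihM i j h, ihN i j h]
  | tick M ih =>
    intro i j h
    simp only [lift]; rw [ih i j h]

theorem subst_lift : ∀ (M : TTm) (k : ℕ) (N : TTm), subst (lift k M) k N = M := by
  intro M
  induction M with
  | var n =>
    intro k N
    simp only [lift]
    split_ifs <;> simp only [subst] <;> split_ifs <;>
      first
      | rfl
      | (exfalso; omega)
      | (simp only [var.injEq]; omega)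
  | lam M ih => intro k N; simp only [lift, subst]; rw [ih]
  | app M N ihM ihN => intro k N'; simp only [lift, subst]; rw [ihM, ihN]
  | tick M ih => intro k N; simp only [lift, subst]; rw [ih]

theorem lift_subst_le : ∀ (M : TTm) (i k : ℕ) (N : TTm), i ≤ k →
    lift i (subst M k N) = subst (lift i M) (k+1) (lift i N) := by
  intro M
  induction M with
  | var n =>
    intro i k N h
    simp only [subst, lift]
    split_ifs <;> simp only [subst, lift] <;> split_ifs <;>
      first
      | rfl
      | (exfalso; omega)
      | (simp only [var.injEq]; omega)
  | lam M ih =>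
    intro i k N h
    simp only [subst, lift]
    rw [ih (i+1) (k+1) (lift 0 N) (by omega), lift_lift N 0 i (by omega)]
  | app M N ihM ihN =>
    intro i k N' h
    simp only [subst, lift]; rw [ihM i k N' h, ihN i k N' h]
  | tick M ih =>
    intro i k N h
    simp only [subst, lift]; rw [ih i k N h]

theorem lift_subst_ge : ∀ (M : TTm) (i k : ℕ) (N : TTm), k ≤ i →
    lift i (subst M k N) = subst (lift (i+1) M) k (lift i N) := by
  intro M
  induction M with
  | var n =>
    intro i k N h
    simp only [subst, lift]
    split_ifs <;> simp only [subst, lift] <;> split_ifs <;>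
      first
      | rfl
      | (exfalso; omega)
      | (simp only [var.injEq]; omega)
  | lam M ih =>
    intro i k N h
    simp only [subst, lift]
    rw [ih (i+1) (k+1) (lift 0 N) (by omega), lift_lift N 0 i (by omega)]
  | app M N ihM ihN =>
    intro i k N' h
    simp only [subst, lift]; rw [ihM i k N' h, ihN i k N' h]
  | tick M ih =>
    intro i k N h
    simp only [subst, lift]; rw [ih i k N h]

theorem subst_subst : ∀ (A : TTm) (i j : ℕ) (N L : TTm),
    subst (subst A i N) (i+j) L
      = subst (subst A (i+j+1) (lift i L)) i (subst N (i+j) L) := by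
  intro A
  induction A with
  | var n =>
    intro i j N L
    simp only [subst]
    split_ifs <;>
      first
      | rfl
      | (exfalso; omega)
      | (exact (subst_lift L i _).symm)
      | (simp only [subst]; split_ifs <;>
          first
          | rfl
          | (exfalso; omega)
          | (simp only [var.injEq]; omega)
          | (exact (subst_lift L i _).symm))
  | lam A ih =>
    intro i j N L
    simp only [subst]
    congr 1
    have e0 : i + 1 + j = i + j + 1 := by omega
    have e1 : lift 0 (lift i L) = lift (i+1) (lift 0 L) := lift_lift L 0 i (by omega)
    have h := ih (i+1) j (lift 0 N) (lift 0 L)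
    rw [e0] at h
    rw [h, e1, lift_subst_le N 0 (i+j) L (by omega)]
  | app A B ihA ihB =>
    intro i j N L
    simp only [subst]; rw [ihA, ihB]
  | tick A ih =>
    intro i j N L
    simp only [subst]; rw [ih]

end TTm

/-! ### Part B : values, determinism, totality -/

theorem isVal_lift {V : TTm} (h : IsVal V) (d : ℕ) : IsVal (V.lift d) := by
  cases h with
  | var n => simp only [TTm.lift]; split_ifs <;> exact IsVal.var _
  | lam M => exact IsVal.lam _

theorem isVal_subst {V W : TTm} (hV : IsVal V) (hW : IsVal W) (k : ℕ) :
    IsVal (V.subst k W) := by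
  cases hV with
  | var n =>
    simp only [TTm.subst]
    split_ifs <;> first | exact hW | exact IsVal.var _
  | lam M => exact IsVal.lam _

theorem rootBv_det {M N N' : TTm} (h : RootBv M N) (h' : RootBv M N') : N = N' := by
  cases h; cases h'; rfl

theorem pw_det : ∀ {a b b' : ℕ × TTm}, Pw a b → Pw a b' → b = b' := by
  intro a b b' h
  induction h generalizing b' with
  | root hr =>
    intro h'
    cases h' with
    | root hr' => rw [rootBv_det hr hr']
    | tick P => cases hr
    | value hv => cases hr; cases hv
    | app hnr _ _ => exact absurd hr (hnr _)
    | pos hp _ => omega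
  | tick P =>
    intro h'
    cases h' with
    | root hr => cases hr
    | tick => rfl
    | value hv => cases hv
    | pos hp _ => omega
  | value hv =>
    intro h'
    cases h' with
    | root hr => cases hr; cases hv
    | tick => cases hv
    | value => rfl
    | app hnr _ _ => cases hv
    | pos hp _ => omega
  | app hnr h1 h2 ih1 ih2 =>
    intro h'
    cases h' with
    | root hr => exact absurd hr (hnr _)
    | value hv => cases hv
    | app hnr' h1' h2' =>
      have e1 := ih1 h1'
      have e2 := ih2 h2'
      simp only [Prod.mk.injEq] at e1 e2 ⊢
      exact ⟨by rw [e1.1, e2.1], by rw [e1.2, e2.2]⟩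
    | pos hp _ => omega
  | pos hp h ih =>
    intro h'
    cases h' with
    | root hr => omega
    | tick => omega
    | value hv => omega
    | app hnr _ _ => omega
    | pos hp' h'' =>
      have := ih h''
      simp only [Prod.mk.injEq] at this ⊢
      exact ⟨by rw [this.1], this.2⟩

theorem pw_total0 : ∀ M : TTm, ∃ d, Pw (0, M) d := by
  intro M
  induction M with
  | var n => exact ⟨_, Pw.value (IsVal.var n)⟩
  | lam M => exact ⟨_, Pw.value (IsVal.lam M)⟩
  | app A B ihA ihB =>
    by_cases h : ∃ N, RootBv (TTm.app A B) N
    · obtain ⟨N, hN⟩ := h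
      exact ⟨_, Pw.root hN⟩
    · push_neg at h
      obtain ⟨⟨k1, A'⟩, h1⟩ := ihA
      obtain ⟨⟨k2, B'⟩, h2⟩ := ihB
      exact ⟨_, Pw.app h h1 h2⟩
  | tick M ih => exact ⟨_, Pw.tick M⟩

theorem pw_total : ∀ c : ℕ × TTm, ∃ d, Pw c d := by
  rintro ⟨n, M⟩
  rcases Nat.eq_zero_or_pos n with rfl | hn
  · exact pw_total0 M
  · obtain ⟨⟨k, M'⟩, h⟩ := pw_total0 M
    exact ⟨_, Pw.pos hn h⟩

noncomputable def Fpw (c : ℕ × TTm) : ℕ × TTm := (pw_total c).choose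

theorem Fpw_spec (c : ℕ × TTm) : Pw c (Fpw c) := (pw_total c).choose_spec

theorem pw_eq_Fpw {c d : ℕ × TTm} (h : Pw c d) : d = Fpw c := pw_det h (Fpw_spec c)

/-- Payoff of the parallel weak strategy. -/
noncomputable def Lpw (c : ℕ × TTm) : ℕ∞ := sSup (Set.range fun i => obs (Fpw^[i] c))

/-! ### Part C : one-layer parallel weak reduction `Tw` -/

inductive Tw : TTm → ℕ → TTm → Prop
  | refl (M : TTm) : Tw M 0 M
  | tick (P : TTm) : Tw (TTm.tick P) 1 P
  | app {A t A' B s B'} : Tw A t A' → Tw B s B' →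
      Tw (TTm.app A B) (t + s) (TTm.app A' B')
  | beta {A V : TTm} : IsVal V → Tw (TTm.app (TTm.lam A) V) 0 (A.subst 0 V)

theorem pw_to_tw : ∀ {c d : ℕ × TTm}, Pw c d → c.1 = 0 → Tw c.2 d.1 d.2 := by
  intro c d h
  induction h with
  | root hr => intro _; cases hr with | beta hv => exact Tw.beta hv
  | tick P => intro _; exact Tw.tick P
  | value hv => intro _; exact Tw.refl _
  | app hnr h1 h2 ih1 ih2 => intro _; exact Tw.app (ih1 rfl) (ih2 rfl)
  | pos hp _ _ => intro h0; omega

theorem tw_val {X : TTm} (hv : IsVal X) {t X'} (h : Tw X t X') : t = 0 ∧ X' = X := by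
  cases hv with
  | var n => cases h; exact ⟨rfl, rfl⟩
  | lam M => cases h; exact ⟨rfl, rfl⟩

theorem tw_max : ∀ {M t M'}, Tw M t M' → ∀ {k N}, Pw (0, M) (k, N) → t ≤ k := by
  intro M t M' h
  induction h with
  | refl M => intro k N _; omega
  | tick P =>
    intro k N h'
    cases h' with
    | root hr => cases hr
    | tick => omega
    | value hv => cases hv
    | pos hp _ => omega
  | app h1 h2 ih1 ih2 =>
    intro k N h'
    cases h' with
    | root hr =>
      cases hr with
      | beta hv =>
        obtain ⟨e1, _⟩ := tw_val (IsVal.lam _) h1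
        obtain ⟨e2, _⟩ := tw_val hv h2
        omega
    | value hv => cases hv
    | app hnr ha hb =>
      have := ih1 ha
      have := ih2 hb
      omega
    | pos hp _ => omega
  | beta hv => intro k N _; omega

theorem tw_sv {X t X'} (h : Tw X t X') (hv' : IsVal X') : Pw (0, X) (t, X') := by
  cases h with
  | refl => exact Pw.value hv'
  | tick => exact Pw.tick _
  | app h1 h2 => cases hv'
  | beta hv => exact Pw.root (RootBv.beta hv)

theorem prod_eq_split {k k' : ℕ} {N N' : TTm} (h : (k, N) = (k', N')) :
    k = k' ∧ N = N' := by
  simpa [Prod.mk.injEq] using h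

/-- The key single-step commutation of `Tw` with the parallel weak strategy. -/
theorem tw_comm : ∀ {M t M'}, Tw M t M' → ∀ {k N k' N'},
    Pw (0, M) (k, N) → Pw (0, M') (k', N') → ∃ s, Tw N s N' ∧ t + k' = k + s := by
  intro M t M' h
  induction h with
  | refl M =>
    intro k N k' N' h1 h2
    obtain ⟨e1, e2⟩ := prod_eq_split (pw_det h1 h2)
    exact ⟨0, by rw [← e2]; exact Tw.refl N, by omega⟩
  | tick P =>
    intro k N k' N' h1 h2
    cases h1 with
    | root hr => cases hr
    | tick => exact ⟨k', pw_to_tw h2 rfl, by omega⟩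
    | value hv => cases hv
    | pos hp _ => omega
  | app hA hB ihA ihB =>
    rename_i A t₁ A' B t₂ B'
    intro k N k' N' h1 h2
    cases h1 with
    | root hr =>
      cases hr with
      | beta hv =>
        obtain ⟨e1, e1'⟩ := tw_val (IsVal.lam _) hA
        obtain ⟨e2, e2'⟩ := tw_val hv hB
        subst e1' e2'
        obtain ⟨f1, f2⟩ := prod_eq_split (pw_det (Pw.root (RootBv.beta hv)) h2)
        exact ⟨0, by rw [← f2]; exact Tw.refl _, by omega⟩
    | value hv => cases hv
    | pos hp _ => omega
    | app hnr ha hb =>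
      rename_i k₁ k₂ A₁ B₁
      cases h2 with
      | root hr =>
        cases hr with
        | beta hv' =>
          rename_i C'
          have pA : Pw (0, A) (t₁, TTm.lam C') := tw_sv hA (IsVal.lam _)
          have pB := tw_sv hB hv'
          obtain ⟨e1, e1'⟩ := prod_eq_split (pw_det ha pA)
          obtain ⟨e2, e2'⟩ := prod_eq_split (pw_det hb pB)
          subst e1' e2'
          exact ⟨0, Tw.beta hv', by omega⟩
      | value hv => cases hv
      | pos hp _ => omega
      | app hnr' ha' hb' =>
        obtain ⟨s₁, hs₁, hb₁⟩ := ihA ha ha'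
        obtain ⟨s₂, hs₂, hb₂⟩ := ihB hb hb'
        exact ⟨s₁ + s₂, Tw.app hs₁ hs₂, by omega⟩
  | beta hv =>
    intro k N k' N' h1 h2
    cases h1 with
    | root hr =>
      cases hr with
      | beta hv2 =>
        exact ⟨k', pw_to_tw h2 rfl, by omega⟩
    | value hv' => cases hv'
    | app hnr _ _ => exact absurd (RootBv.beta hv) (hnr _)
    | pos hp _ => omega

/-! ### Part C2 : configuration-level commutation and domination -/

def TwC (d e : ℕ × TTm) : Prop := ∃ t, Tw d.2 t e.2 ∧ e.1 = d.1 + t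

theorem fpw_eq {n : ℕ} {M : TTm} {k : ℕ} {N : TTm} (h : Pw (0, M) (k, N)) :
    Fpw (n, M) = (n + k, N) := by
  rcases Nat.eq_zero_or_pos n with rfl | hn
  · have := pw_eq_Fpw h
    simp only [Nat.zero_add]
    exact this.symm
  · exact (pw_eq_Fpw (Pw.pos hn h)).symm

theorem fpw_pair (n : ℕ) (M : TTm) :
    ∃ k N, Pw (0, M) (k, N) ∧ Fpw (n, M) = (n + k, N) := by
  obtain ⟨⟨k, N⟩, h⟩ := pw_total0 M
  exact ⟨k, N, h, fpw_eq h⟩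

theorem twc_comm {d e : ℕ × TTm} (h : TwC d e) : TwC (Fpw d) (Fpw e) := by
  obtain ⟨t, htw, he⟩ := h
  obtain ⟨n, M⟩ := d
  obtain ⟨m, M'⟩ := e
  simp only at htw he
  subst he
  obtain ⟨k, N, hk, hF⟩ := fpw_pair n M
  obtain ⟨k', N', hk', hF'⟩ := fpw_pair (n + t) M'
  obtain ⟨s, hs, hbal⟩ := tw_comm htw hk hk'
  rw [hF, hF']
  exact ⟨s, hs, by omega⟩

theorem twc_obs_le {d e : ℕ × TTm} (h : TwC d e) : e.1 ≤ (Fpw d).1 := by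
  obtain ⟨t, htw, he⟩ := h
  obtain ⟨n, M⟩ := d
  obtain ⟨k, N, hk, hF⟩ := fpw_pair n M
  have := tw_max htw hk
  rw [hF]
  simp only at he
  omega

theorem twc_staggered {d e : ℕ × TTm} (h : TwC d e) :
    ∀ j, (Fpw^[j] e).1 ≤ (Fpw^[j+1] d).1 := by
  intro j
  induction j generalizing d e with
  | zero => simpa using twc_obs_le h
  | succ j ih =>
    rw [Function.iterate_succ_apply, Function.iterate_succ_apply]
    exact ih (twc_comm h)

theorem twc_chain_bound {c e : ℕ × TTm} (h : Relation.ReflTransGen TwC c e) :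
    ∃ j, e.1 ≤ (Fpw^[j] c).1 := by
  induction h using Relation.ReflTransGen.head_induction_on with
  | refl => exact ⟨0, le_rfl⟩
  | head hstep _ ih =>
    obtain ⟨j, hj⟩ := ih
    exact ⟨j + 1, le_trans hj (twc_staggered hstep j)⟩

theorem weakBv_tw {M M' : TTm} (h : WeakBv M M') : Tw M 0 M' := by
  induction h with
  | root hr => cases hr with | beta hv => exact Tw.beta hv
  | appL h ih => simpa using Tw.app ih (Tw.refl _)
  | appR h ih => simpa using Tw.app (Tw.refl _) ih

theorem wtick_tw {M M' : TTm} (h : WTick M M') : Tw M 1 M' := by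
  induction h with
  | root P => exact Tw.tick P
  | appL h ih => simpa using Tw.app ih (Tw.refl _)
  | appR h ih => simpa using Tw.app (Tw.refl _) ih

theorem weakRed_twc {d e : ℕ × TTm} (h : WeakRed d e) : TwC d e := by
  rcases h with ⟨h, hn⟩ | ⟨h, hn⟩
  · exact ⟨0, weakBv_tw h, by omega⟩
  · exact ⟨1, wtick_tw h, hn⟩

theorem pw_twc {d : ℕ × TTm} : TwC d (Fpw d) := by
  obtain ⟨n, M⟩ := d
  obtain ⟨k, N, hk, hF⟩ := fpw_pair n M
  rw [hF]
  exact ⟨k, pw_to_tw hk rfl, rfl⟩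

theorem weak_chain_bound {c e : ℕ × TTm} (h : Relation.ReflTransGen WeakRed c e) :
    ∃ j, e.1 ≤ (Fpw^[j] c).1 :=
  twc_chain_bound (Relation.ReflTransGen.mono (fun _ _ => weakRed_twc) _ _ h)

/-! ### Part D : graded parallel βv-reduction -/

inductive PfN : ℕ → TTm → TTm → Prop
  | var (n : ℕ) : PfN 0 (TTm.var n) (TTm.var n)
  | lam {a M M'} : PfN a M M' → PfN 0 (TTm.lam M) (TTm.lam M')
  | tick {a M M'} : PfN a M M' → PfN a (TTm.tick M) (TTm.tick M')
  | app {a b A A' B B'} : PfN a A A' → PfN b B B' →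
      PfN (a + b) (TTm.app A B) (TTm.app A' B')
  | beta {a b D D' U U'} : PfN a D D' → PfN b U U' → IsVal U →
      PfN (1 + a) (TTm.app (TTm.lam D) U) (D'.subst 0 U')

def Pf (M M' : TTm) : Prop := ∃ g, PfN g M M'

theorem pfN_refl : ∀ M : TTm, PfN 0 M M := by
  intro M
  induction M with
  | var n => exact PfN.var n
  | lam M ih => exact PfN.lam ih
  | app A B ihA ihB => simpa using PfN.app ihA ihB
  | tick M ih => exact PfN.tick ih

theorem pf_refl (M : TTm) : Pf M M := ⟨0, pfN_refl M⟩

theorem fullBv_pf {M M' : TTm} (h : FullBv M M') : Pf M M' := by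
  induction h with
  | root hr =>
    cases hr with
    | beta hv => exact ⟨_, PfN.beta (pfN_refl _) (pfN_refl _) hv⟩
  | lam h ih => obtain ⟨g, hg⟩ := ih; exact ⟨0, PfN.lam hg⟩
  | appL h ih => obtain ⟨g, hg⟩ := ih; exact ⟨_, PfN.app hg (pfN_refl _)⟩
  | appR h ih => obtain ⟨g, hg⟩ := ih; exact ⟨_, PfN.app (pfN_refl _) hg⟩
  | tick h ih => obtain ⟨g, hg⟩ := ih; exact ⟨g, PfN.tick hg⟩

theorem pfN_val {V V' : TTm} (hv : IsVal V) {g} (h : PfN g V V') :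
    g = 0 ∧ IsVal V' := by
  cases hv with
  | var n => cases h; exact ⟨rfl, IsVal.var _⟩
  | lam M => cases h; exact ⟨rfl, IsVal.lam _⟩

theorem pfN_lift {g M M'} (h : PfN g M M') : ∀ d, PfN g (M.lift d) (M'.lift d) := by
  induction h with
  | var n => intro d; simp only [TTm.lift]; split_ifs <;> exact PfN.var _
  | lam h ih => intro d; exact PfN.lam (ih (d+1))
  | tick h ih => intro d; exact PfN.tick (ih d)
  | app hA hB ihA ihB => intro d; exact PfN.app (ihA d) (ihB d)
  | beta hD hU hv ihD ihU =>
    intro d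
    rename_i a b D D' U U'
    have : (D'.subst 0 U').lift d = (D'.lift (d+1)).subst 0 (U'.lift d) :=
      TTm.lift_subst_ge D' d 0 U' (by omega)
    rw [this]
    exact PfN.beta (ihD (d+1)) (ihU d) (isVal_lift hv d)

theorem pfN_subst : ∀ {a A A'}, PfN a A A' → ∀ (k : ℕ) {W W'}, PfN 0 W W' →
    IsVal W → IsVal W' → ∃ a' ≤ a, PfN a' (A.subst k W) (A'.subst k W') := by
  intro a A A' h
  induction h with
  | var n =>
    intro k W W' hW hvW hvW'
    simp only [TTm.subst]
    split_ifs
    · exact ⟨0, le_rfl, hW⟩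
    · exact ⟨0, le_rfl, PfN.var _⟩
    · exact ⟨0, le_rfl, PfN.var _⟩
  | lam h ih =>
    intro k W W' hW hvW hvW'
    obtain ⟨a', _, h'⟩ := ih (k+1) (pfN_lift hW 0) (isVal_lift hvW 0) (isVal_lift hvW' 0)
    exact ⟨0, le_rfl, PfN.lam h'⟩
  | tick h ih =>
    intro k W W' hW hvW hvW'
    obtain ⟨a', ha', h'⟩ := ih k hW hvW hvW'
    exact ⟨a', ha', PfN.tick h'⟩
  | app hA hB ihA ihB =>
    intro k W W' hW hvW hvW'
    obtain ⟨a', ha', h1⟩ := ihA k hW hvW hvW'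
    obtain ⟨b', hb', h2⟩ := ihB k hW hvW hvW'
    exact ⟨a' + b', by omega, PfN.app h1 h2⟩
  | beta hD hU hv ihD ihU =>
    intro k W W' hW hvW hvW'
    rename_i a b D D' U U'
    obtain ⟨a', ha', h1⟩ := ihD (k+1) (pfN_lift hW 0) (isVal_lift hvW 0) (isVal_lift hvW' 0)
    obtain ⟨b', hb', h2⟩ := ihU k hW hvW hvW'
    refine ⟨1 + a', by omega, ?_⟩
    have e : (D'.subst 0 U').subst k W'
        = ((D'.subst (k+1) (TTm.lift 0 W')).subst 0 (U'.subst k W')) := by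
      have := TTm.subst_subst D' 0 k U' W'
      simpa using this
    rw [TTm.subst]
    rw [e]
    exact PfN.beta h1 h2 (isVal_subst hv hvW k)

/-! ### Part E : weak standardization -/

theorem rtg_weak_ctxL (Q : TTm) {c e : ℕ × TTm}
    (h : Relation.ReflTransGen WeakRed c e) :
    Relation.ReflTransGen WeakRed (c.1, TTm.app c.2 Q) (e.1, TTm.app e.2 Q) := by
  induction h with
  | refl => exact Relation.ReflTransGen.refl
  | tail _ h2 ih =>
    refine ih.tail ?_
    rcases h2 with ⟨hb, hn⟩ | ⟨ht, hn⟩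
    · exact Or.inl ⟨WeakBv.appL hb, hn⟩
    · exact Or.inr ⟨WTick.appL ht, hn⟩

theorem rtg_weak_ctxR (Q : TTm) {c e : ℕ × TTm}
    (h : Relation.ReflTransGen WeakRed c e) :
    Relation.ReflTransGen WeakRed (c.1, TTm.app Q c.2) (e.1, TTm.app Q e.2) := by
  induction h with
  | refl => exact Relation.ReflTransGen.refl
  | tail _ h2 ih =>
    refine ih.tail ?_
    rcases h2 with ⟨hb, hn⟩ | ⟨ht, hn⟩
    · exact Or.inl ⟨WeakBv.appR hb, hn⟩
    · exact Or.inr ⟨WTick.appR ht, hn⟩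

theorem rtg_weakBv_cfg {A A₀ : TTm} (n : ℕ) (h : Relation.ReflTransGen WeakBv A A₀) :
    Relation.ReflTransGen WeakRed (n, A) (n, A₀) := by
  induction h with
  | refl => exact Relation.ReflTransGen.refl
  | tail _ h2 ih => exact ih.tail (Or.inl ⟨h2, rfl⟩)

/-- Weak evaluation of a term whose parallel reduct is a value. -/
theorem vl (g : ℕ) {B B' : TTm} (h : PfN g B B') (hv : IsVal B') :
    ∃ B₀, Relation.ReflTransGen WeakBv B B₀ ∧ IsVal B₀ ∧ Pf B₀ B' := by
  induction g using Nat.strong_induction_on generalizing B B' with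
  | _ g IH =>
  cases h with
  | var n => exact ⟨_, Relation.ReflTransGen.refl, IsVal.var n, pf_refl _⟩
  | lam h => exact ⟨_, Relation.ReflTransGen.refl, IsVal.lam _, ⟨0, PfN.lam h⟩⟩
  | tick h => cases hv
  | app hA hB => cases hv
  | @beta a b D D' U U' hD hU hvU =>
    have e0 := pfN_val hvU hU
    have h0 : PfN 0 U U' := by rw [← e0.1]; exact hU
    obtain ⟨a', ha', hs⟩ := pfN_subst hD 0 h0 hvU e0.2
    obtain ⟨B₀, ch, v0, pf⟩ := IH a' (by omega) hs hv
    exact ⟨B₀, Relation.ReflTransGen.head (WeakBv.root (RootBv.beta hvU)) ch, v0, pf⟩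

theorem lexHelp {a b c d : ℕ} (h : a ≤ c) (h2 : a = c → b < d) :
    Prod.Lex (· < ·) (· < ·) (a, b) (c, d) := by
  rcases lt_or_eq_of_le h with h | h
  · exact Prod.Lex.left _ _ h
  · subst h
    exact Prod.Lex.right _ (h2 rfl)

/-- A parallel βv-step can be postponed after a weak step. -/
theorem swap : ∀ (g : ℕ) (M : TTm) {M₁ : TTm} {n : ℕ} {c₂ : ℕ × TTm},
    PfN g M M₁ → WeakRed (n, M₁) c₂ →
    ∃ X, Relation.ReflTransGen WeakRed (n, M) (c₂.1, X) ∧ Pf X c₂.2 := by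
  intro g M M₁ n c₂ hp hw
  cases hp with
  | var m =>
    rcases hw with ⟨h, _⟩ | ⟨h, _⟩
    · cases h with | root hr => cases hr
    · cases h
  | lam h =>
    rcases hw with ⟨h', _⟩ | ⟨h', _⟩
    · cases h' with | root hr => cases hr
    · cases h'
  | @tick gP P P₁ hP =>
    obtain ⟨m, Z⟩ := c₂
    rcases hw with ⟨hbv, hn⟩ | ⟨ht, hn⟩
    · cases hbv with | root hr => cases hr
    · cases ht with
      | root =>
        simp only at hn
        subst hn
        exact ⟨P, Relation.ReflTransGen.single (Or.inr ⟨WTick.root P, rfl⟩), ⟨_, hP⟩⟩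
  | @app ga gb A A₁ B B₁ hA hB =>
    obtain ⟨m, Z⟩ := c₂
    rcases hw with ⟨hbv, hn⟩ | ⟨ht, hn⟩
    · simp only at hn
      subst hn
      cases hbv with
      | root hr =>
        cases hr with
        | @beta C₁ V hvV =>
          obtain ⟨A₀, chA, vA, pfA⟩ := vl ga hA (IsVal.lam C₁)
          obtain ⟨B₀, chB, vB, pfB⟩ := vl gb hB hvV
          obtain ⟨gA, pA⟩ := pfA
          cases vA with
          | var k => cases pA
          | lam C₀ =>
            cases pA with
            | lam pC =>
              obtain ⟨gB, pB⟩ := pfB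
              have hb0 : PfN 0 B₀ B₁ := by rw [← (pfN_val vB pB).1]; exact pB
              obtain ⟨a', _, hs⟩ := pfN_subst pC 0 hb0 vB hvV
              refine ⟨C₀.subst 0 B₀, ?_, ⟨a', hs⟩⟩
              refine Relation.ReflTransGen.trans (rtg_weak_ctxL B (rtg_weakBv_cfg m chA)) ?_
              refine Relation.ReflTransGen.trans (rtg_weak_ctxR (TTm.lam C₀) (rtg_weakBv_cfg m chB)) ?_
              exact Relation.ReflTransGen.single
                (Or.inl ⟨WeakBv.root (RootBv.beta vB), rfl⟩)
      | @appL _ A₂ _ h2 =>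
        obtain ⟨X, ch, pf⟩ := swap ga A hA (show WeakRed (m, A₁) (m, A₂) from Or.inl ⟨h2, rfl⟩)
        obtain ⟨gX, pX⟩ := pf
        exact ⟨TTm.app X B, rtg_weak_ctxL B ch, ⟨gX + gb, PfN.app pX hB⟩⟩
      | @appR _ _ B₂ h2 =>
        obtain ⟨X, ch, pf⟩ := swap gb B hB (show WeakRed (m, B₁) (m, B₂) from Or.inl ⟨h2, rfl⟩)
        obtain ⟨gX, pX⟩ := pf
        exact ⟨TTm.app A X, rtg_weak_ctxR A ch, ⟨ga + gX, PfN.app hA pX⟩⟩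
    · simp only at hn
      cases ht with
      | @appL _ A₂ _ h2 =>
        obtain ⟨X, ch, pf⟩ := swap ga A hA (show WeakRed (n, A₁) (m, A₂) from Or.inr ⟨h2, hn⟩)
        obtain ⟨gX, pX⟩ := pf
        exact ⟨TTm.app X B, rtg_weak_ctxL B ch, ⟨gX + gb, PfN.app pX hB⟩⟩
      | @appR _ _ B₂ h2 =>
        obtain ⟨X, ch, pf⟩ := swap gb B hB (show WeakRed (n, B₁) (m, B₂) from Or.inr ⟨h2, hn⟩)
        obtain ⟨gX, pX⟩ := pf
        exact ⟨TTm.app A X, rtg_weak_ctxR A ch, ⟨ga + gX, PfN.app hA pX⟩⟩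
  | @beta a b D D' U U' hD hU hvU =>
    have e0 := pfN_val hvU hU
    have h0 : PfN 0 U U' := by rw [← e0.1]; exact hU
    obtain ⟨a', ha', hs⟩ := pfN_subst hD 0 h0 hvU e0.2
    obtain ⟨X, ch, pf⟩ := swap a' (D.subst 0 U) hs hw
    exact ⟨X, Relation.ReflTransGen.head
      (show WeakRed (n, TTm.app (TTm.lam D) U) (n, D.subst 0 U) from
        Or.inl ⟨WeakBv.root (RootBv.beta hvU), rfl⟩) ch, pf⟩
termination_by g M => (g, sizeOf M)
decreasing_by
  all_goals simp_wf
  all_goals subst_vars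
  all_goals
    first
    | exact lexHelp (by omega) (fun _ => by simp only [TTm.app.sizeOf_spec]; omega)
    | exact Prod.Lex.left _ _ (by omega)

/-! ### Part F : the standardization bound -/

inductive WSeq : ℕ × TTm → ℕ → ℕ × TTm → Prop
  | refl (c : ℕ × TTm) : WSeq c 0 c
  | head {c d ℓ e} : WeakRed c d → WSeq d ℓ e → WSeq c (ℓ + 1) e

theorem wseq_mono {c ℓ e} (h : WSeq c ℓ e) : c.1 ≤ e.1 := by
  induction h with
  | refl c => exact le_rfl
  | head h1 _ ih =>
    rcases h1 with ⟨_, hn⟩ | ⟨_, hn⟩ <;> omega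

theorem wseq_tail {c ℓ d e} (h : WSeq c ℓ d) (h2 : WeakRed d e) : WSeq c (ℓ + 1) e := by
  induction h with
  | refl c => exact WSeq.head h2 (WSeq.refl e)
  | head h1 h3 ih => exact WSeq.head h1 (ih h2)

theorem rtg_wseq {c e} (h : Relation.ReflTransGen WeakRed c e) : ∃ ℓ, WSeq c ℓ e := by
  induction h with
  | refl => exact ⟨0, WSeq.refl c⟩
  | tail _ h2 ih =>
    obtain ⟨ℓ, hℓ⟩ := ih
    exact ⟨ℓ + 1, wseq_tail hℓ h2⟩

/-- Parallel βv-steps preserve weakly-reachable payoffs. -/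
theorem pl : ∀ (W ℓ : ℕ) (n : ℕ) (M M₁ : TTm) (e : ℕ × TTm),
    Pf M M₁ → WSeq (n, M₁) ℓ e → e.1 ≤ n + W →
    ∃ e', Relation.ReflTransGen WeakRed (n, M) e' ∧ e.1 ≤ e'.1 := by
  intro W ℓ n M M₁ e hp hs hb
  cases hs with
  | refl => exact ⟨(n, M), Relation.ReflTransGen.refl, le_rfl⟩
  | @head _ c₂ ℓ' _ hw hs' =>
    obtain ⟨g, hg⟩ := hp
    obtain ⟨X, ch, pfX⟩ := swap g M hg hw
    rcases hw with ⟨_, hn⟩ | ⟨_, hn⟩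
    · have hrec := pl W ℓ' c₂.1 X c₂.2 e pfX (by simpa using hs') ?_
      · obtain ⟨e', ch', hle⟩ := hrec
        exact ⟨e', ch.trans ch', hle⟩
      · omega
    · have hW : 1 ≤ W := by
        have := wseq_mono hs'
        omega
      have hrec := pl (W - 1) ℓ' c₂.1 X c₂.2 e pfX (by simpa using hs') ?_
      · obtain ⟨e', ch', hle⟩ := hrec
        exact ⟨e', ch.trans ch', hle⟩
      · have := wseq_mono hs'
        omega
termination_by W ℓ => (W, ℓ)

theorem pf_weak_reach {n : ℕ} {M M₁ : TTm} {X : ℕ × TTm}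
    (hp : Pf M M₁) (h : Relation.ReflTransGen WeakRed (n, M₁) X) :
    ∃ X', Relation.ReflTransGen WeakRed (n, M) X' ∧ X.1 ≤ X'.1 := by
  obtain ⟨ℓ, hs⟩ := rtg_wseq h
  exact pl X.1 ℓ n M M₁ X hp hs (by omega)

theorem weakBv_fullBv {M M' : TTm} (h : WeakBv M M') : FullBv M M' := by
  induction h with
  | root hr => exact FullBv.root hr
  | appL _ ih => exact FullBv.appL ih
  | appR _ ih => exact FullBv.appR ih

theorem weakRed_fullRed {c d : ℕ × TTm} (h : WeakRed c d) : FullRed c d := by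
  rcases h with ⟨hb, hn⟩ | ⟨ht, hn⟩
  · exact Or.inl ⟨weakBv_fullBv hb, hn⟩
  · exact Or.inr ⟨ht, hn⟩

/-- Weak reachability dominates full reachability in payoff. -/
theorem full_weak_bound {c e : ℕ × TTm} (h : Relation.ReflTransGen FullRed c e) :
    ∃ X, Relation.ReflTransGen WeakRed c X ∧ e.1 ≤ X.1 := by
  induction h using Relation.ReflTransGen.head_induction_on with
  | refl => exact ⟨e, Relation.ReflTransGen.refl, le_rfl⟩
  | @head c' d hstep _ ih =>
    obtain ⟨X, hw, hle⟩ := ih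
    rcases hstep with ⟨hb, hn⟩ | ⟨ht, hn⟩
    · obtain ⟨m, M⟩ := c'
      obtain ⟨m', M'⟩ := d
      simp only at hb hn
      subst hn
      obtain ⟨X', hw', hle'⟩ := pf_weak_reach (fullBv_pf hb) hw
      exact ⟨X', hw', le_trans hle hle'⟩
    · exact ⟨X, Relation.ReflTransGen.head (Or.inr ⟨ht, hn⟩) hw, hle⟩

/-- Main upper bound: any payoff reachable by full reduction is dominated by `Lpw`. -/
theorem full_bound {c e : ℕ × TTm} (h : Relation.ReflTransGen FullRed c e) :
    obs e ≤ Lpw c := by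
  obtain ⟨X, hw, hle⟩ := full_weak_bound h
  obtain ⟨j, hj⟩ := weak_chain_bound hw
  refine le_trans ?_ (le_sSup ⟨j, rfl⟩)
  simp only [obs]
  exact_mod_cast le_trans hle hj

/-! ### Part G : simulation of the strategy by full reduction -/

theorem rtg_full_ctxL (Q : TTm) {c e : ℕ × TTm}
    (h : Relation.ReflTransGen FullRed c e) :
    Relation.ReflTransGen FullRed (c.1, TTm.app c.2 Q) (e.1, TTm.app e.2 Q) := by
  induction h with
  | refl => exact Relation.ReflTransGen.refl
  | tail _ h2 ih =>
    refine ih.tail ?_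
    rcases h2 with ⟨hb, hn⟩ | ⟨ht, hn⟩
    · exact Or.inl ⟨FullBv.appL hb, hn⟩
    · exact Or.inr ⟨WTick.appL ht, hn⟩

theorem rtg_full_ctxR (Q : TTm) {c e : ℕ × TTm}
    (h : Relation.ReflTransGen FullRed c e) :
    Relation.ReflTransGen FullRed (c.1, TTm.app Q c.2) (e.1, TTm.app Q e.2) := by
  induction h with
  | refl => exact Relation.ReflTransGen.refl
  | tail _ h2 ih =>
    refine ih.tail ?_
    rcases h2 with ⟨hb, hn⟩ | ⟨ht, hn⟩
    · exact Or.inl ⟨FullBv.appR hb, hn⟩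
    · exact Or.inr ⟨WTick.appR ht, hn⟩

theorem tw_fullred {M t M'} (h : Tw M t M') (n : ℕ) :
    Relation.ReflTransGen FullRed (n, M) (n + t, M') := by
  induction h generalizing n with
  | refl M => simpa using Relation.ReflTransGen.refl
  | tick P =>
    exact Relation.ReflTransGen.single
      (show FullRed (n, TTm.tick P) (n + 1, P) from Or.inr ⟨WTick.root P, rfl⟩)
  | @app A t A' B s B' hA hB ihA ihB =>
    have h1 := rtg_full_ctxL B (ihA n)
    have h2 := rtg_full_ctxR A' (ihB (n + t))
    simp only at h1 h2
    exact h1.trans (by rw [Nat.add_assoc] at h2; exact h2)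
  | @beta A V hv =>
    simpa using Relation.ReflTransGen.single
      (show FullRed (n, TTm.app (TTm.lam A) V) (n, A.subst 0 V) from
        Or.inl ⟨FullBv.root (RootBv.beta hv), rfl⟩)

theorem pw_fullred {c : ℕ × TTm} : Relation.ReflTransGen FullRed c (Fpw c) := by
  obtain ⟨n, M⟩ := c
  obtain ⟨k, N, hk, hF⟩ := fpw_pair n M
  rw [hF]
  exact tw_fullred (pw_to_tw hk rfl) n

/-! ### Part H : an optimal full-reduction sequence -/

theorem exists_chain {α : Type*} {R : α → α → Prop} {a b : α}
    (h : Relation.ReflTransGen R a b) :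
    ∃ l, List.Chain R a l ∧ (a :: l).getLast? = some b := by
  induction h using Relation.ReflTransGen.head_induction_on with
  | refl => exact ⟨[], List.Chain.nil, rfl⟩
  | @head a a' hstep _ ih =>
    obtain ⟨l, hch, hl⟩ := ih
    refine ⟨a' :: l, List.Chain.cons hstep hch, ?_⟩
    rw [List.getLast?_cons_cons]
    exact hl

open Classical in
noncomputable def nx (d : ℕ × TTm) : ℕ × TTm :=
  if h : ∃ e, FullRed d e then h.choose else d

noncomputable def pathTo (d : ℕ × TTm) : List (ℕ × TTm) :=
  (exists_chain (pw_fullred (c := d))).choose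

theorem pathTo_chain (d : ℕ × TTm) : List.Chain FullRed d (pathTo d) :=
  (exists_chain (pw_fullred (c := d))).choose_spec.1

theorem pathTo_last (d : ℕ × TTm) :
    (d :: pathTo d).getLast? = some (Fpw d) :=
  (exists_chain (pw_fullred (c := d))).choose_spec.2

noncomputable def mseq (c : ℕ × TTm) : ℕ → (ℕ × TTm) × List (ℕ × TTm)
  | 0 => (c, pathTo c)
  | n+1 =>
    match mseq c n with
    | (d, []) => (nx d, [])
    | (_, e :: l) => (e, if l = [] then pathTo e else l)

theorem mseq_trav (c : ℕ × TTm) : ∀ (p : List (ℕ × TTm)) (z : ℕ × TTm) (n : ℕ)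
    (d : ℕ × TTm), mseq c n = (d, p ++ [z]) →
    mseq c (n + p.length + 1) = (z, pathTo z) := by
  intro p
  induction p with
  | nil =>
    intro z n d h
    simp only [List.length_nil, Nat.add_zero]
    simp [mseq, h]
  | cons e p' ih =>
    intro z n d h
    have h1 : mseq c (n + 1) = (e, p' ++ [z]) := by
      simp [mseq, h]
    have h2 := ih z (n + 1) e h1
    have : n + (e :: p').length + 1 = (n + 1) + p'.length + 1 := by simp; omega
    rw [this]
    exact h2

theorem mseq_cov (c : ℕ × TTm) : ∀ i, ∃ n,
    mseq c n = (Fpw^[i] c, pathTo (Fpw^[i] c)) := by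
  intro i
  induction i with
  | zero => exact ⟨0, rfl⟩
  | succ i ih =>
    obtain ⟨n, hn⟩ := ih
    set d := Fpw^[i] c with hd
    rcases List.eq_nil_or_concat (pathTo d) with hemp | ⟨p, z, hpz⟩
    on_goal 2 => rw [List.concat_eq_append] at hpz
    · have hfix : Fpw d = d := by
        have h2 := pathTo_last d
        rw [hemp] at h2
        simp at h2
        exact h2.symm
      refine ⟨n, ?_⟩
      rw [Function.iterate_succ_apply', ← hd, hfix]
      exact hn
    · have hz : z = Fpw d := by
        have h2 := pathTo_last d
        rw [hpz] at h2
        rw [show d :: (p ++ [z]) = (d :: p) ++ [z] from rfl,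
          List.getLast?_concat] at h2
        exact Option.some.inj h2
      have h1 : mseq c n = (d, p ++ [z]) := by rw [hn, hpz]
      have h2 := mseq_trav c p z n d h1
      refine ⟨n + p.length + 1, ?_⟩
      rw [Function.iterate_succ_apply', ← hd, ← hz]
      exact h2

theorem mseq_inv (c : ℕ × TTm) : ∀ n,
    Relation.ReflTransGen FullRed c (mseq c n).1 ∧
      List.Chain FullRed (mseq c n).1 (mseq c n).2 := by
  intro n
  induction n with
  | zero => exact ⟨Relation.ReflTransGen.refl, pathTo_chain c⟩
  | succ n ih =>
    obtain ⟨hr, hc⟩ := ih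
    rcases h : mseq c n with ⟨d, l⟩
    rw [h] at hr hc
    simp only at hr hc
    cases l with
    | nil =>
      have h1 : mseq c (n+1) = (nx d, []) := by simp [mseq, h]
      rw [h1]
      constructor
      · by_cases hx : ∃ e, FullRed d e
        · have : nx d = hx.choose := by simp [nx, hx]
          rw [this]
          exact hr.tail hx.choose_spec
        · have : nx d = d := by simp [nx, hx]
          rw [this]
          exact hr
      · exact List.Chain.nil
    | cons e l' =>
      have hde : FullRed d e ∧ List.Chain FullRed e l' := List.chain_cons.mp hc
      have h1 : mseq c (n+1) = (e, if l' = [] then pathTo e else l') := by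
        simp [mseq, h]
      rw [h1]
      refine ⟨hr.tail hde.1, ?_⟩
      by_cases hl : l' = []
      · simp [hl, pathTo_chain]
      · simp [hl, hde.2]

theorem mseq_cseq (c : ℕ × TTm) : CSeq FullRed c (fun n => (mseq c n).1) := by
  refine ⟨rfl, ?_⟩
  intro n
  show FullRed (mseq c n).1 (mseq c (n+1)).1 ∨
    (CNormal FullRed (mseq c n).1 ∧ (mseq c (n+1)).1 = (mseq c n).1)
  rcases h : mseq c n with ⟨d, l⟩
  cases l with
  | nil =>
    have h1 : mseq c (n+1) = (nx d, []) := by simp [mseq, h]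
    by_cases hx : ∃ e, FullRed d e
    · left
      have h2 : nx d = hx.choose := by simp [nx, hx]
      rw [h1, h2]
      exact hx.choose_spec
    · right
      constructor
      · intro e he
        exact hx ⟨e, he⟩
      · have h2 : nx d = d := by simp [nx, hx]
        rw [h1, h2]
  | cons e l' =>
    left
    have hc := (mseq_inv c n).2
    rw [h] at hc
    have hde : FullRed d e := (List.chain_cons.mp hc).1
    have h1 : mseq c (n+1) = (e, if l' = [] then pathTo e else l') := by
      simp [mseq, h]
    rw [h1]
    exact hde

theorem mseq_lub (c : ℕ × TTm) :
    IsLUB (Set.range fun i => obs ((mseq c i).1)) (Lpw c) := by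
  constructor
  · rintro x ⟨i, rfl⟩
    exact full_bound (mseq_inv c i).1
  · intro u hu
    refine sSup_le ?_
    rintro x ⟨j, rfl⟩
    show obs (Fpw^[j] c) ≤ u
    obtain ⟨n, hn⟩ := mseq_cov c j
    have he : obs (Fpw^[j] c) = obs ((mseq c n).1) := by rw [hn]
    rw [he]
    exact hu ⟨n, rfl⟩

/-! ### Part I : assembly -/

theorem orbit_cseq (c : ℕ × TTm) : CSeq Pw c (fun i => Fpw^[i] c) := by
  refine ⟨rfl, ?_⟩
  intro i
  left
  show Pw (Fpw^[i] c) (Fpw^[i+1] c)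
  rw [Function.iterate_succ_apply']
  exact Fpw_spec _

theorem orbit_lub (c : ℕ × TTm) :
    IsLUB (Set.range fun i => obs (Fpw^[i] c)) (Lpw c) := isLUB_sSup _

theorem cconv_pw (c : ℕ × TTm) : CConv Pw c (Lpw c) :=
  ⟨_, orbit_cseq c, orbit_lub c⟩

theorem cseq_pw_eq {c : ℕ × TTm} {f : ℕ → ℕ × TTm} (h : CSeq Pw c f) :
    ∀ i, f i = Fpw^[i] c := by
  intro i
  induction i with
  | zero => exact h.1
  | succ i ih =>
    rcases h.2 i with hstep | ⟨hnorm, _⟩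
    · rw [Function.iterate_succ_apply', ← ih]
      exact pw_eq_Fpw hstep
    · exact absurd (Fpw_spec (f i)) (hnorm _)

theorem cseq_reach {R : ℕ × TTm → ℕ × TTm → Prop} {c : ℕ × TTm} {f : ℕ → ℕ × TTm}
    (hR : ∀ a b, R a b → FullRed a b) (h : CSeq R c f) :
    ∀ i, Relation.ReflTransGen FullRed c (f i) := by
  intro i
  induction i with
  | zero => rw [h.1]
  | succ i ih =>
    rcases h.2 i with hstep | ⟨_, heq⟩
    · exact ih.tail (hR _ _ hstep)
    · rwa [heq]

theorem cseq_bound {R : ℕ × TTm → ℕ × TTm → Prop} {c : ℕ × TTm} {f : ℕ → ℕ × TTm}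
    {p : ℕ∞} (hR : ∀ a b, R a b → FullRed a b) (h : CSeq R c f)
    (hlub : IsLUB (Set.range fun i => obs (f i)) p) : p ≤ Lpw c := by
  refine hlub.2 ?_
  rintro x ⟨i, rfl⟩
  exact full_bound (cseq_reach hR h i)

theorem payoff_asymptotic_normalization' :
    (∀ c : ℕ × TTm, ∃! c', Pw c c') ∧
    (∀ (c : ℕ × TTm) (p : ℕ∞), (CConv WeakRed c p ∨ CConv FullRed c p) →
      ∃ p' : ℕ∞, p ≤ p' ∧ CConv Pw c p') ∧
    (∀ c : ℕ × TTm, ∃ g : ℕ∞, IsGreatest {p : ℕ∞ | CConv FullRed c p} g ∧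
      ∀ f, CSeq Pw c f → IsLUB (Set.range fun i => obs (f i)) g) := by
  refine ⟨?_, ?_, ?_⟩
  · intro c
    exact ⟨Fpw c, Fpw_spec c, fun y hy => pw_eq_Fpw hy⟩
  · intro c p hp
    refine ⟨Lpw c, ?_, cconv_pw c⟩
    rcases hp with ⟨f, hseq, hlub⟩ | ⟨f, hseq, hlub⟩
    · exact cseq_bound (fun a b h => weakRed_fullRed h) hseq hlub
    · exact cseq_bound (fun a b h => h) hseq hlub
  · intro c
    refine ⟨Lpw c, ⟨⟨_, mseq_cseq c, mseq_lub c⟩, ?_⟩, ?_⟩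
    · rintro p ⟨f, hseq, hlub⟩
      exact cseq_bound (fun a b h => h) hseq hlub
    · intro f hf
      have he : ∀ i, obs (f i) = obs (Fpw^[i] c) := fun i => by rw [cseq_pw_eq hf i]
      have hfe : (fun i => obs (f i)) = fun i => obs (Fpw^[i] c) := by
        funext i
        exact he i
      rw [hfe]
      exact orbit_lub c

/-- **Asymptotic normalization for the payoff λ-calculus**:
parallel weak reduction `⇒pw` is deterministic (each configuration has exactly one
`⇒pw`-successor); `⇒pw` is asymptotically complete for `⊳w` and for `→`; and for every
configuration `c` the set `Lim(c, →)` has a greatest element `⟦c⟧`, which is the limit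
of the (unique) `⇒pw`-sequence from `c`. -/
theorem payoff_asymptotic_normalization :
    (∀ c : ℕ × TTm, ∃! c', Pw c c') ∧
    (∀ (c : ℕ × TTm) (p : ℕ∞), (CConv WeakRed c p ∨ CConv FullRed c p) →
      ∃ p' : ℕ∞, p ≤ p' ∧ CConv Pw c p') ∧
    (∀ c : ℕ × TTm, ∃ g : ℕ∞, IsGreatest {p : ℕ∞ | CConv FullRed c p} g ∧
      ∀ f, CSeq Pw c f → IsLUB (Set.range fun i => obs (f i)) g) := by
  exact payoff_asymptotic_normalization'
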